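/- Let C be a set of symmetric real n×n matrices that is closed under multiplication by nonnegative scalars and such that for every entrywise-nonnegative vector x ∈ ℝⁿ and every A ∈ C, the matrix Diag(x)·A·Diag(x) belongs to C. If A attains the maximum of 𝟏ᵀB𝟏 over all positive semidefinite B ∈ C with tr B = 1, then diag(A) = c·(A·𝟏) for some real number c. -/

import Mathlib

open Matrix

/-- Auxiliary: the perturbation inequality. -/
lemma statement7_key (n : ℕ) (C : Set (Matrix (Fin n) (Fin n) ℝ))
    (hsymm : ∀ A ∈ C, A.IsSymm)
    (hcone : ∀ c : ℝ, 0 ≤ c → ∀ A ∈ C, c • A ∈ C)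
    (hdiagcl : ∀ x : Fin n → ℝ, (∀ i, 0 ≤ x i) → ∀ A ∈ C,
      Matrix.diagonal x * A * Matrix.diagonal x ∈ C)
    (A : Matrix (Fin n) (Fin n) ℝ) (hAC : A ∈ C) (hApsd : A.PosSemidef)
    (hAtr : A.trace = 1)
    (hmax : ∀ B ∈ C, B.PosSemidef → B.trace = 1 → (∑ i, ∑ j, B i j) ≤ ∑ i, ∑ j, A i j)
    (i : Fin n) (t : ℝ) (ht : -1 ≤ t) (hτ : 0 < 1 + (2*t + t^2) * A i i) :
    (∑ j, ∑ k, A j k) + (2*t*(∑ k, A i k) + t^2 * A i i)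
      ≤ (1 + (2*t + t^2) * A i i) * (∑ j, ∑ k, A j k) := by
  classical
  set x : Fin n → ℝ := fun j => if j = i then 1 + t else 1 with hx
  have hxnn : ∀ j, 0 ≤ x j := by
    intro j; simp only [hx]; split <;> norm_num <;> linarith
  set B := Matrix.diagonal x * A * Matrix.diagonal x with hB
  have hBC : B ∈ C := hdiagcl x hxnn A hAC
  have hBent : ∀ j k, B j k = x j * A j k * x k := by
    intro j k; rw [hB, Matrix.mul_diagonal, Matrix.diagonal_mul]
  have hBpsd : B.PosSemidef := by
    simpa [Matrix.diagonal_conjTranspose] using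
      hApsd.mul_mul_conjTranspose_same (Matrix.diagonal x)
  have hAsym : ∀ j k, A k j = A j k := by
    intro j k
    have h := hsymm A hAC
    rw [Matrix.IsSymm] at h
    exact congrFun (congrFun h j) k
  have sum_split : ∀ f : Fin n → ℝ,
      ∑ j, f j * (if j = i then 1 + t else 1) = (∑ j, f j) + t * f i := by
    intro f
    have h : ∀ j, f j * (if j = i then 1 + t else 1)
        = f j + (if j = i then t * f j else 0) := by
      intro j; by_cases h : j = i <;> simp [h] <;> ring
    simp only [h, Finset.sum_add_distrib]
    rw [Finset.sum_ite_eq' Finset.univ i (fun j => t * f j)]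
    simp
  -- trace of B
  have htrA : ∑ j, A j j = 1 := by simpa [Matrix.trace, Matrix.diag] using hAtr
  have htrB : B.trace = 1 + (2*t + t^2) * A i i := by
    have h : ∀ j, B j j = A j j + (if j = i then (2*t + t^2) * A i i else 0) := by
      intro j; rw [hBent]; simp only [hx]
      by_cases h : j = i
      · subst h; simp; ring
      · simp [h]
    rw [Matrix.trace]
    simp only [Matrix.diag]
    rw [Finset.sum_congr rfl fun j _ => h j, Finset.sum_add_distrib,
      Finset.sum_ite_eq' Finset.univ i (fun _ => (2*t + t^2) * A i i)]
    simp [htrA]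
  -- sum of B
  have hsumB : ∑ j, ∑ k, B j k
      = (∑ j, ∑ k, A j k) + (2*t*(∑ k, A i k) + t^2 * A i i) := by
    have inner : ∀ j, ∑ k, B j k = ((∑ k, A j k) + t * A j i) * x j := by
      intro j
      have : ∑ k, B j k = (∑ k, A j k * x k) * x j := by
        rw [Finset.sum_mul]
        exact Finset.sum_congr rfl fun k _ => by rw [hBent]; ring
      rw [this, show (∑ k, A j k * x k) = (∑ k, A j k) + t * A j i from sum_split (A j)]
    rw [Finset.sum_congr rfl fun j _ => inner j,
      show ∀ g : Fin n → ℝ, (∑ j, g j * x j) = (∑ j, g j) + t * g i from fun g => sum_split g]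
    have hcol : ∑ j, t * A j i = t * ∑ k, A i k := by
      rw [← Finset.mul_sum]
      exact congrArg (t * ·) (Finset.sum_congr rfl fun j _ => hAsym i j)
    rw [Finset.sum_add_distrib, hcol]
    ring
  -- normalize and apply optimality
  set τ : ℝ := 1 + (2*t + t^2) * A i i with hτdef
  have hτne : τ ≠ 0 := ne_of_gt hτ
  have hB'C : (1/τ) • B ∈ C := hcone _ (by positivity) B hBC
  have hB'psd : ((1/τ) • B).PosSemidef := by
    rw [Matrix.posSemidef_iff_dotProduct_mulVec]
    constructor
    · rw [Matrix.IsHermitian, Matrix.conjTranspose_smul, hBpsd.1.eq]; simp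
    · intro y
      have := hBpsd.dotProduct_mulVec_nonneg y
      simp only [Matrix.smul_mulVec, dotProduct_smul, smul_eq_mul]
      exact mul_nonneg (by positivity) this
  have hB'tr : ((1/τ) • B).trace = 1 := by
    rw [Matrix.trace_smul, htrB, smul_eq_mul]
    field_simp
  have h := hmax _ hB'C hB'psd hB'tr
  have hsum' : (∑ j, ∑ k, ((1/τ) • B) j k) = (1/τ) * ∑ j, ∑ k, B j k := by
    simp [Matrix.smul_apply, Finset.mul_sum]
  rw [hsum', hsumB] at h
  rw [div_mul_eq_mul_div, div_le_iff₀ hτ] at h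
  linarith [h]

/-- let `C` be a set of symmetric real `n×n` matrices closed under nonnegative
scaling and under `A ↦ Diag(x)·A·Diag(x)` for entrywise-nonnegative `x`. If `A` attains the
maximum of `𝟙ᵀB𝟙` over positive semidefinite `B ∈ C` with `tr B = 1`, then
`diag(A) = c·(A𝟙)` for some real `c`. -/
theorem statement7 (n : ℕ) (C : Set (Matrix (Fin n) (Fin n) ℝ))
    (hsymm : ∀ A ∈ C, A.IsSymm)
    (hcone : ∀ c : ℝ, 0 ≤ c → ∀ A ∈ C, c • A ∈ C)
    (hdiagcl : ∀ x : Fin n → ℝ, (∀ i, 0 ≤ x i) → ∀ A ∈ C,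
      Matrix.diagonal x * A * Matrix.diagonal x ∈ C)
    (A : Matrix (Fin n) (Fin n) ℝ) (hAC : A ∈ C) (hApsd : A.PosSemidef)
    (hAtr : A.trace = 1)
    (hmax : ∀ B ∈ C, B.PosSemidef → B.trace = 1 → (∑ i, ∑ j, B i j) ≤ ∑ i, ∑ j, A i j) :
    ∃ c : ℝ, A.diag = c • (A *ᵥ fun _ => (1 : ℝ)) := by
  classical
  set S : ℝ := ∑ j, ∑ k, A j k with hS
  have key := statement7_key n C hsymm hcone hdiagcl A hAC hApsd hAtr hmax
  have hdiagnn : ∀ i, 0 ≤ A i i := fun i => by simpa using hApsd.dotProduct_mulVec_nonneg (Pi.single i 1)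
  -- Step 1: row sums proportional to diagonal
  have step1 : ∀ i, S * A i i - (∑ k, A i k) = 0 := by
    intro i
    by_contra hα
    set a : ℝ := A i i with ha
    set R : ℝ := ∑ k, A i k with hR
    set α : ℝ := S * a - R with hαdef
    set β : ℝ := S * a - a with hβdef
    have ineq : ∀ t : ℝ, -1 ≤ t → 0 < 1 + (2*t + t^2) * a → 0 ≤ 2*t*α + t^2*β := by
      intro t h1 h2
      have h := key i t h1 h2
      rw [← hS, ← hR, ← ha] at h
      nlinarith [h]
    set δ : ℝ := min (1/2) (min (|α| / (2*(|β|+1))) (1/(8*(|a|+1)))) with hδdef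
    have hαpos : 0 < |α| := abs_pos.mpr hα
    have hδpos : 0 < δ := by
      apply lt_min (by norm_num)
      apply lt_min
      · positivity
      · positivity
    have hδ1 : δ ≤ 1/2 := min_le_left _ _
    have hδ2 : δ ≤ |α| / (2*(|β|+1)) := le_trans (min_le_right _ _) (min_le_left _ _)
    have hδ3 : δ ≤ 1/(8*(|a|+1)) := le_trans (min_le_right _ _) (min_le_right _ _)
    have hann : 0 ≤ |a| := abs_nonneg a
    have ha1 : a ≤ |a| := le_abs_self a
    have ha2 : -|a| ≤ a := neg_abs_le a
    have hb1 : β ≤ |β| := le_abs_self β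
    have hb2 : -|β| ≤ β := neg_abs_le β
    have hbnn : 0 ≤ |β| := abs_nonneg β
    have hδ3' : δ * (8*(|a|+1)) ≤ 1 := by
      rw [← le_div_iff₀ (by positivity)]; exact hδ3
    have hδ2' : δ * (2*(|β|+1)) ≤ |α| := by
      rw [← le_div_iff₀ (by positivity)]; exact hδ2
    -- choose t of appropriate sign
    rcases lt_or_gt_of_ne hα with hneg | hpos
    · -- α < 0, take t = δ
      have habs : |α| = -α := abs_of_neg hneg
      have hτ : 0 < 1 + (2*δ + δ^2) * a := by nlinarith
      have h := ineq δ (by linarith) hτ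
      nlinarith
    · -- α > 0, take t = -δ
      have habs : |α| = α := abs_of_pos hpos
      have hτ : 0 < 1 + (2*(-δ) + (-δ)^2) * a := by nlinarith
      have h := ineq (-δ) (by linarith) hτ
      nlinarith
  -- Step 2: S ≠ 0
  have hSne : S ≠ 0 := by
    intro h0
    have hz : ∀ i, A i i = 0 := by
      intro i
      set a : ℝ := A i i with ha
      have hanonneg : 0 ≤ a := hdiagnn i
      set δ : ℝ := min (1/2) (1/(8*(a+1))) with hδdef
      have hδpos : 0 < δ := lt_min (by norm_num) (by positivity)
      have hδ1 : δ ≤ 1/2 := min_le_left _ _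
      have hδ3 : δ ≤ 1/(8*(a+1)) := min_le_right _ _
      have hδ3' : δ * (8*(a+1)) ≤ 1 := by
        rw [← le_div_iff₀ (by positivity)]; exact hδ3
      have hτ : 0 < 1 + (2*δ + δ^2) * a := by nlinarith
      have h := key i δ (by linarith) hτ
      rw [← hS, h0, ← ha] at h
      have hR : ∑ k, A i k = 0 := by
        have := step1 i; rw [h0] at this; linarith
      rw [hR] at h
      have h2 : δ^2 * a ≤ 0 := by nlinarith [h]
      have h3 : a ≤ 0 := by
        by_contra hc
        push_neg at hc
        nlinarith [mul_pos (pow_pos hδpos 2) hc]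
      linarith
    have : A.trace = 0 := by
      rw [Matrix.trace]
      simp only [Matrix.diag]
      exact Finset.sum_eq_zero fun i _ => hz i
    rw [hAtr] at this
    norm_num at this
  -- Conclude
  refine ⟨S⁻¹, ?_⟩
  funext i
  have h := step1 i
  have hmv : (A *ᵥ fun _ => (1 : ℝ)) i = ∑ k, A i k := by
    simp [Matrix.mulVec, dotProduct]
  simp only [Matrix.diag, Pi.smul_apply, smul_eq_mul, hmv]
  field_simp
  linarith
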